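/- The limit lim_{z→0⁺} h(z) exists and is finite; equivalently, h extends to a continuous function on [0, s₀], and 0 ≤ h(z) ≤ s₀²/m(s₀) for all z ∈ (0, s₀). -/

import Mathlib

open MeasureTheory Set Filter Topology

/-- Under condition (M) for `m` on `(0,S)` with `S ∈ (0,∞]`, fixing
`s₀ ∈ (0,S)` and `h(z) := ∫_{s₀}^z (z−r)/m(r) dr`, the limit of `h` as `z → 0⁺` exists
and is finite; equivalently `h` extends continuously to `[0,s₀]`; moreover
`0 ≤ h(z) ≤ s₀²/m(s₀)` for all `z ∈ (0,s₀)`. -/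
theorem limit_of_h_at_zero_exists
    (S : EReal) (hS : 0 < S) (m : ℝ → ℝ)
    (hm_c2 : ContDiffOn ℝ 2 m {z : ℝ | 0 < z ∧ (z : EReal) < S})
    (hm_pos : ∀ z : ℝ, 0 < z → (z : EReal) < S → 0 < m z)
    (hm_conc : ∀ z : ℝ, 0 < z → (z : EReal) < S → deriv (deriv m) z ≤ 0)
    (hm0 : Tendsto m (𝓝[>] (0 : ℝ)) (𝓝 0))
    (hmS : S ≠ ⊤ → Tendsto m (𝓝[<] S.toReal) (𝓝 0))
    (s₀ : ℝ) (hs₀ : 0 < s₀) (hs₀S : (s₀ : EReal) < S) :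
    (∃ L : ℝ, Tendsto (fun z => ∫ r in s₀..z, (z - r) / m r) (𝓝[>] (0 : ℝ)) (𝓝 L)) ∧
    (∃ H : ℝ → ℝ, ContinuousOn H (Icc 0 s₀) ∧
      ∀ z ∈ Ioo (0 : ℝ) s₀, H z = ∫ r in s₀..z, (z - r) / m r) ∧
    (∀ z ∈ Ioo (0 : ℝ) s₀,
      0 ≤ (∫ r in s₀..z, (z - r) / m r) ∧
      (∫ r in s₀..z, (z - r) / m r) ≤ s₀ ^ 2 / m s₀) := by
  set U : Set ℝ := {z : ℝ | 0 < z ∧ (z : EReal) < S} with hU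
  have hUopen : IsOpen U := by
    have h1 : IsOpen {z : ℝ | 0 < z} := isOpen_lt continuous_const continuous_id
    have h2 : IsOpen {z : ℝ | (z : EReal) < S} := isOpen_Iio.preimage continuous_coe_real_ereal
    exact h1.inter h2
  have memU : ∀ x : ℝ, 0 < x → x ≤ s₀ → x ∈ U := fun x hx hxs =>
    ⟨hx, lt_of_le_of_lt (EReal.coe_le_coe_iff.2 hxs) hs₀S⟩
  have hmcont : ContinuousOn m (Ioc 0 s₀) :=
    hm_c2.continuousOn.mono fun x hx => memU x hx.1 hx.2
  have hms₀ : 0 < m s₀ := hm_pos s₀ hs₀ hs₀S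
  -- concavity
  have hdiff : ∀ x ∈ U, DifferentiableAt ℝ m x := fun x hx =>
    (hm_c2.differentiableOn (by norm_num) x hx).differentiableAt (hUopen.mem_nhds hx)
  have hderiv_cd : ContDiffOn ℝ 1 (deriv m) U :=
    hm_c2.deriv_of_isOpen hUopen (by norm_num)
  have hconc : ConcaveOn ℝ (Ioc 0 s₀) m := by
    apply concaveOn_of_deriv2_nonpos (convex_Ioc 0 s₀) hmcont
    · rw [interior_Ioc]
      exact fun x hx => (hdiff x (memU x hx.1 hx.2.le)).differentiableWithinAt
    · rw [interior_Ioc]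
      intro x hx
      have hxU := memU x hx.1 hx.2.le
      exact ((hderiv_cd.differentiableOn (by norm_num) x hxU).differentiableAt
        (hUopen.mem_nhds hxU)).differentiableWithinAt
    · rw [interior_Ioc]
      intro x hx
      have hxU := memU x hx.1 hx.2.le
      simpa [Function.iterate_succ, Function.iterate_zero] using hm_conc x hxU.1 hxU.2
  -- key lower bound : r * m s₀ ≤ s₀ * m r on (0, s₀]
  have hkey : ∀ r ∈ Ioc (0:ℝ) s₀, r * m s₀ ≤ s₀ * m r := by
    intro r hr
    rcases eq_or_lt_of_le hr.2 with heq | hlt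
    · subst heq; exact le_rfl
    · have T1 : Tendsto (fun ε : ℝ => (s₀ - r) / (s₀ - ε)) (𝓝[>] 0) (𝓝 ((s₀ - r) / s₀)) := by
        have : Tendsto (fun ε : ℝ => (s₀ - r) / (s₀ - ε)) (𝓝 0) (𝓝 ((s₀ - r) / (s₀ - 0))) :=
          tendsto_const_nhds.div (tendsto_const_nhds.sub tendsto_id)
            (by simpa using hs₀.ne')
        simpa using this.mono_left nhdsWithin_le_nhds
      have T3 : Tendsto (fun ε : ℝ => (r - ε) / (s₀ - ε)) (𝓝[>] 0) (𝓝 (r / s₀)) := by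
        have : Tendsto (fun ε : ℝ => (r - ε) / (s₀ - ε)) (𝓝 0) (𝓝 ((r - 0) / (s₀ - 0))) :=
          (tendsto_const_nhds.sub tendsto_id).div (tendsto_const_nhds.sub tendsto_id)
            (by simpa using hs₀.ne')
        simpa using this.mono_left nhdsWithin_le_nhds
      have hlim : Tendsto (fun ε : ℝ => (s₀ - r) / (s₀ - ε) * m ε + (r - ε) / (s₀ - ε) * m s₀)
          (𝓝[>] 0) (𝓝 (r / s₀ * m s₀)) := by
        have := (T1.mul hm0).add (T3.mul_const (m s₀))
        simpa using this
      have hev : ∀ᶠ ε in 𝓝[>] (0:ℝ),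
          (s₀ - r) / (s₀ - ε) * m ε + (r - ε) / (s₀ - ε) * m s₀ ≤ m r := by
        filter_upwards [Ioo_mem_nhdsGT_of_mem (show (0:ℝ) ∈ Ico (0:ℝ) r from ⟨le_rfl, hr.1⟩)]
          with ε hε
        have hε1 : 0 < ε := hε.1
        have hε2 : ε < r := hε.2
        have hεs : ε < s₀ := hε2.trans hlt
        have ha : (0:ℝ) ≤ (s₀ - r) / (s₀ - ε) := div_nonneg (by linarith) (by linarith)
        have hb : (0:ℝ) ≤ (r - ε) / (s₀ - ε) := div_nonneg (by linarith) (by linarith)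
        have hab : (s₀ - r) / (s₀ - ε) + (r - ε) / (s₀ - ε) = 1 := by
          have hsum : s₀ - r + (r - ε) = s₀ - ε := by ring
          rw [← add_div, hsum, div_self (sub_ne_zero.2 hεs.ne')]
        have hmemε : ε ∈ Ioc (0:ℝ) s₀ := ⟨hε.1, hεs.le⟩
        have hmems : s₀ ∈ Ioc (0:ℝ) s₀ := ⟨hs₀, le_rfl⟩
        have hcc := hconc.2 hmemε hmems ha hb hab
        simp only [smul_eq_mul] at hcc
        have hpt : (s₀ - r) / (s₀ - ε) * ε + (r - ε) / (s₀ - ε) * s₀ = r := by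
          rw [div_mul_eq_mul_div, div_mul_eq_mul_div, ← add_div,
            show (s₀ - r) * ε + (r - ε) * s₀ = r * (s₀ - ε) by ring,
            mul_div_assoc, div_self (sub_ne_zero.2 hεs.ne'), mul_one]
        rw [hpt] at hcc
        exact hcc
      have hle : r / s₀ * m s₀ ≤ m r := le_of_tendsto hlim hev
      rw [div_mul_eq_mul_div, div_le_iff₀ hs₀] at hle
      linarith
  -- continuity of the integrand family
  have hcont_g : ∀ z : ℝ, ContinuousOn (fun r => (r - z) / m r) (Ioc 0 s₀) :=
    fun z => ((continuous_id.sub continuous_const).continuousOn).div hmcont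
      fun x hx => (hm_pos x hx.1 (memU x hx.1 hx.2).2).ne'
  -- pointwise bound
  have hptb : ∀ z r : ℝ, 0 ≤ z → z < r → r ≤ s₀ → (r - z) / m r ≤ s₀ / m s₀ := by
    intro z r hz hzr hrs
    have hr0 : 0 < r := lt_of_le_of_lt hz hzr
    have hmr : 0 < m r := hm_pos r hr0 (memU r hr0 hrs).2
    have h1 : (r - z) / m r ≤ r / m r := by
      gcongr
      linarith
    have h2 : r / m r ≤ s₀ / m s₀ := by
      rw [div_le_div_iff₀ hmr hms₀]
      exact hkey r ⟨hr0, hrs⟩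
    exact h1.trans h2
  -- rewriting the interval integral as a set integral
  have hrw : ∀ z : ℝ, z ≤ s₀ →
      (∫ r in s₀..z, (z - r) / m r) = ∫ r in Ioc z s₀, (r - z) / m r := by
    intro z hz
    rw [intervalIntegral.integral_symm, intervalIntegral.integral_of_le hz]
    rw [← integral_neg]
    congr 1
    funext r
    rw [← neg_div, neg_sub]
  -- integrability
  have hint : ∀ z : ℝ, 0 < z → z ≤ s₀ →
      IntegrableOn (fun r => (r - z) / m r) (Ioc z s₀) := by
    intro z hz hzs
    have hIcc : Icc z s₀ ⊆ Ioc 0 s₀ := fun y hy => ⟨lt_of_lt_of_le hz hy.1, hy.2⟩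
    exact (((hcont_g z).mono hIcc).integrableOn_Icc).mono_set Ioc_subset_Icc_self
  -- Part 3 : bounds
  have hbounds : ∀ z ∈ Ioo (0:ℝ) s₀,
      0 ≤ (∫ r in s₀..z, (z - r) / m r) ∧
      (∫ r in s₀..z, (z - r) / m r) ≤ s₀ ^ 2 / m s₀ := by
    intro z hz
    rw [hrw z hz.2.le]
    constructor
    · apply setIntegral_nonneg measurableSet_Ioc
      intro r hr
      have hr0 : 0 < r := hz.1.trans hr.1
      exact div_nonneg (by linarith [hr.1]) (hm_pos r hr0 (memU r hr0 hr.2).2).le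
    · have hmono : (∫ r in Ioc z s₀, (r - z) / m r) ≤ ∫ _r in Ioc z s₀, s₀ / m s₀ := by
        apply setIntegral_mono_on (hint z hz.1 hz.2.le)
          (integrableOn_const measure_Ioc_lt_top.ne) measurableSet_Ioc
        intro r hr
        exact hptb z r hz.1.le hr.1 hr.2
      refine hmono.trans ?_
      rw [setIntegral_const, Real.volume_real_Ioc_of_le (by linarith [hz.2] : z ≤ s₀), smul_eq_mul]
      have h1 : (0:ℝ) ≤ s₀ / m s₀ := div_nonneg hs₀.le hms₀.le
      have h2 : s₀ - z ≤ s₀ := by linarith [hz.1]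
      calc (s₀ - z) * (s₀ / m s₀) ≤ s₀ * (s₀ / m s₀) := by
            exact mul_le_mul_of_nonneg_right h2 h1
        _ = s₀ ^ 2 / m s₀ := by rw [pow_two, mul_div_assoc]
  -- Part 1 : the limit, by dominated convergence
  set L : ℝ := ∫ r in Ioc (0:ℝ) s₀, r / m r with hL
  set F : ℝ → ℝ → ℝ := fun z => (Ioc z s₀).indicator (fun r => (r - z) / m r) with hF
  have hF_meas : ∀ z : ℝ, AEStronglyMeasurable (F z) (volume.restrict (Ioc (0:ℝ) s₀)) :=
    fun z => AEStronglyMeasurable.indicator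
      ((hcont_g z).aestronglyMeasurable measurableSet_Ioc) measurableSet_Ioc
  have h_bound : ∀ᶠ z in 𝓝[>] (0:ℝ), ∀ᵐ r ∂(volume.restrict (Ioc (0:ℝ) s₀)),
      ‖F z r‖ ≤ s₀ / m s₀ := by
    filter_upwards [self_mem_nhdsWithin] with z hz
    filter_upwards [ae_restrict_mem measurableSet_Ioc] with r hr
    by_cases hrz : r ∈ Ioc z s₀
    · rw [hF]
      simp only [indicator_of_mem hrz]
      have hr0 : 0 < r := hr.1
      have hmr : 0 < m r := hm_pos r hr0 (memU r hr0 hr.2).2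
      rw [Real.norm_eq_abs, abs_of_nonneg (div_nonneg (by linarith [hrz.1, (hz : (0:ℝ) < z)]) hmr.le)]
      exact hptb z r (le_of_lt hz) hrz.1 hrz.2
    · rw [hF]
      simp only [indicator_of_notMem hrz, norm_zero]
      exact div_nonneg hs₀.le hms₀.le
  have h_lim : ∀ᵐ r ∂(volume.restrict (Ioc (0:ℝ) s₀)),
      Tendsto (fun z => F z r) (𝓝[>] (0:ℝ)) (𝓝 (r / m r)) := by
    filter_upwards [ae_restrict_mem measurableSet_Ioc] with r hr
    have base : Tendsto (fun z : ℝ => (r - z) / m r) (𝓝[>] (0:ℝ)) (𝓝 (r / m r)) := by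
      have : Tendsto (fun z : ℝ => (r - z) / m r) (𝓝 0) (𝓝 ((r - 0) / m r)) :=
        (tendsto_const_nhds.sub tendsto_id).div_const (m r)
      simpa using this.mono_left nhdsWithin_le_nhds
    apply base.congr'
    filter_upwards [Ioo_mem_nhdsGT_of_mem (show (0:ℝ) ∈ Ico (0:ℝ) r from ⟨le_rfl, hr.1⟩)]
      with z hzr
    rw [hF]
    simp only [indicator_of_mem (show r ∈ Ioc z s₀ from ⟨hzr.2, hr.2⟩)]
  have hDCT : Tendsto (fun z => ∫ r in Ioc (0:ℝ) s₀, F z r) (𝓝[>] (0:ℝ)) (𝓝 L) :=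
    tendsto_integral_filter_of_dominated_convergence (fun _ => s₀ / m s₀)
      (Filter.Eventually.of_forall hF_meas) h_bound
      (integrableOn_const measure_Ioc_lt_top.ne) h_lim
  have heqF : ∀ᶠ z in 𝓝[>] (0:ℝ),
      (∫ r in Ioc (0:ℝ) s₀, F z r) = ∫ r in s₀..z, (z - r) / m r := by
    filter_upwards [Ioo_mem_nhdsGT_of_mem (show (0:ℝ) ∈ Ico (0:ℝ) s₀ from ⟨le_rfl, hs₀⟩)]
      with z hz
    rw [hF]
    rw [setIntegral_indicator measurableSet_Ioc]
    rw [Ioc_inter_Ioc, max_eq_right hz.1.le, min_self]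
    exact (hrw z hz.2.le).symm
  have hTend : Tendsto (fun z => ∫ r in s₀..z, (z - r) / m r) (𝓝[>] (0:ℝ)) (𝓝 L) :=
    hDCT.congr' heqF
  -- Part 2 : continuous extension
  set A : ℝ → ℝ := fun z => ∫ r in s₀..z, (m r)⁻¹ with hA
  set B : ℝ → ℝ := fun z => ∫ r in s₀..z, r / m r with hB
  have hintIcc : ∀ ε : ℝ, 0 < ε → ε ≤ s₀ → Icc ε s₀ ⊆ Ioc 0 s₀ :=
    fun ε hε _ y hy => ⟨lt_of_lt_of_le hε hy.1, hy.2⟩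
  have hdecomp : ∀ z ∈ Ioc (0:ℝ) s₀,
      (∫ r in s₀..z, (z - r) / m r) = z * A z - B z := by
    intro z hz
    have huIcc : uIcc s₀ z = Icc z s₀ := uIcc_of_ge hz.2
    have hsub : Icc z s₀ ⊆ Ioc 0 s₀ := hintIcc z hz.1 hz.2
    have h1 : IntervalIntegrable (fun r => (m r)⁻¹) volume s₀ z := by
      apply ContinuousOn.intervalIntegrable
      rw [huIcc]
      exact (hmcont.mono hsub).inv₀ fun x hx =>
        (hm_pos x (hsub hx).1 (memU x (hsub hx).1 (hsub hx).2).2).ne'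
    have h2 : IntervalIntegrable (fun r => r / m r) volume s₀ z := by
      apply ContinuousOn.intervalIntegrable
      rw [huIcc]
      exact (continuous_id.continuousOn.div (hmcont.mono hsub)) fun x hx =>
        (hm_pos x (hsub hx).1 (memU x (hsub hx).1 (hsub hx).2).2).ne'
    calc (∫ r in s₀..z, (z - r) / m r)
        = ∫ r in s₀..z, (z * (m r)⁻¹ - r / m r) := by
          apply intervalIntegral.integral_congr
          intro r _
          show (z - r) / m r = z * (m r)⁻¹ - r / m r
          rw [sub_div, div_eq_mul_inv]
      _ = (∫ r in s₀..z, z * (m r)⁻¹) - ∫ r in s₀..z, r / m r :=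
          intervalIntegral.integral_sub (h1.const_mul z) h2
      _ = z * A z - B z := by rw [intervalIntegral.integral_const_mul]
  set H : ℝ → ℝ := fun z => if z = 0 then L else ∫ r in s₀..z, (z - r) / m r with hHdef
  have hHeq : ∀ z ∈ Ioo (0:ℝ) s₀, H z = ∫ r in s₀..z, (z - r) / m r := by
    intro z hz
    rw [hHdef]
    simp only [if_neg hz.1.ne']
  have hHIoi : Tendsto H (𝓝[>] (0:ℝ)) (𝓝 L) := by
    apply hTend.congr'
    filter_upwards [self_mem_nhdsWithin] with z hz
    rw [hHdef]
    simp only [if_neg (ne_of_gt (show (0:ℝ) < z from hz))]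
  have hHcont : ContinuousOn H (Icc 0 s₀) := by
    intro x hx
    rcases hx.1.eq_or_lt with h0 | h0
    · -- x = 0
      rw [← h0]
      have hIcc : Icc (0:ℝ) s₀ = {0} ∪ Ioc 0 s₀ := by
        ext y
        simp only [mem_Icc, mem_union, mem_singleton_iff, mem_Ioc]
        constructor
        · rintro ⟨h1, h2⟩
          rcases h1.eq_or_lt with h | h
          · exact Or.inl h.symm
          · exact Or.inr ⟨h, h2⟩
        · rintro (rfl | ⟨h1, h2⟩)
          · exact ⟨le_rfl, hs₀.le⟩
          · exact ⟨h1.le, h2⟩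
      rw [ContinuousWithinAt, hIcc, nhdsWithin_union, tendsto_sup]
      have hH0 : H 0 = L := by rw [hHdef]; simp
      rw [hH0]
      constructor
      · rw [nhdsWithin_singleton]
        simpa [hH0] using tendsto_pure_nhds H 0
      · exact hHIoi.mono_left (nhdsWithin_mono _ Ioc_subset_Ioi_self)
    · -- 0 < x
      have hx' : x ∈ Ioc (0:ℝ) s₀ := ⟨h0, hx.2⟩
      set ε : ℝ := x / 2 with hε
      have hε0 : 0 < ε := half_pos h0
      have hεx : ε < x := half_lt_self h0
      have hεs : ε < s₀ := hεx.trans_le hx.2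
      have hsub : Icc ε s₀ ⊆ Ioc 0 s₀ := hintIcc ε hε0 hεs.le
      have hne : ∀ y ∈ Icc ε s₀, m y ≠ 0 := fun y hy =>
        (hm_pos y (hsub hy).1 (memU y (hsub hy).1 (hsub hy).2).2).ne'
      have hintInv : IntegrableOn (fun r => (m r)⁻¹) (uIcc s₀ ε) := by
        rw [uIcc_of_ge hεs.le]
        exact (((hmcont.mono hsub).inv₀ hne)).integrableOn_Icc
      have hintDiv : IntegrableOn (fun r => r / m r) (uIcc s₀ ε) := by
        rw [uIcc_of_ge hεs.le]
        exact ((continuous_id.continuousOn.div (hmcont.mono hsub)) hne).integrableOn_Icc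
      have hAcont : ContinuousOn A (Icc ε s₀) := by
        have := intervalIntegral.continuousOn_primitive_interval hintInv
        rwa [uIcc_of_ge hεs.le] at this
      have hBcont : ContinuousOn B (Icc ε s₀) := by
        have := intervalIntegral.continuousOn_primitive_interval hintDiv
        rwa [uIcc_of_ge hεs.le] at this
      have hg : ContinuousOn (fun z => z * A z - B z) (Icc ε s₀) :=
        (continuousOn_id.mul hAcont).sub hBcont
      have hmem : Icc ε s₀ ∈ 𝓝[Icc 0 s₀] x := by
        apply mem_nhdsWithin.2
        refine ⟨Ioi ε, isOpen_Ioi, hεx, ?_⟩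
        rintro y ⟨hy1, hy2⟩
        exact ⟨le_of_lt hy1, hy2.2⟩
      have hxmem : x ∈ Icc ε s₀ := ⟨hεx.le, hx.2⟩
      have hcw : ContinuousWithinAt (fun z => z * A z - B z) (Icc 0 s₀) x :=
        (hg x hxmem).mono_of_mem_nhdsWithin hmem
      apply hcw.congr_of_eventuallyEq
      · filter_upwards [hmem] with y hy
        have hy' : y ∈ Ioc (0:ℝ) s₀ := hsub hy
        rw [hHdef]
        simp only [if_neg hy'.1.ne']
        exact hdecomp y hy'
      · rw [hHdef]
        simp only [if_neg h0.ne']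
        exact hdecomp x hx'
  exact ⟨⟨L, hTend⟩, ⟨H, hHcont, hHeq⟩, hbounds⟩
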